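/- Let n ≥ 1 and let d_0 = d_1 = ⋯ = d_n = 1. Then there exists a checkpoint set C ⊆ {0,…,n} with 0 ∈ C and n ∈ C whose cost Σ_{i ∈ C} d_i + max over segments of C of the segment's d-sum is at most 2√n + 2. -/
import Mathlib


/-- `h` and `i` are consecutive checkpoints of `C`. -/
def ConsecPair (C : Finset ℕ) (h i : ℕ) : Prop :=
  h ∈ C ∧ i ∈ C ∧ h < i ∧ ∀ c ∈ C, c ≤ h ∨ i ≤ c

/-- The maximum `d`-sum of a segment of `C` (a maximal block of consecutive
non-checkpoint indices, i.e. the indices strictly between two consecutive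
checkpoints); it is `0` when every segment is empty. -/
noncomputable def maxSegSum (d : ℕ → ℝ) (C : Finset ℕ) : ℝ :=
  sSup {x : ℝ | ∃ h i, ConsecPair C h i ∧ x = ∑ k ∈ Finset.Ioo h i, d k}

/-- Achievability of Chen et al.'s `O(√n)` claim: with unit data sizes
`d_0 = ⋯ = d_n = 1`, there is a checkpoint set `C ⊆ {0,…,n}` with `0 ∈ C` and
`n ∈ C` whose cost (checkpoint memory plus maximum segment sum) is at most
`2√n + 2`. -/
theorem sqrt_upper_bound (n : ℕ) (hn : 1 ≤ n) :
    ∃ C : Finset ℕ, C ⊆ Finset.range (n + 1) ∧ 0 ∈ C ∧ n ∈ C ∧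
      (∑ i ∈ C, (1 : ℝ)) + maxSegSum (fun _ => (1 : ℝ)) C ≤
        2 * Real.sqrt n + 2 := by
  set r := Real.sqrt n with hrdef
  have hr0 : (0 : ℝ) < r := Real.sqrt_pos.2 (by exact_mod_cast hn)
  have hr1 : (1 : ℝ) ≤ r := by
    rw [hrdef, show (1:ℝ) = Real.sqrt 1 by simp]
    exact Real.sqrt_le_sqrt (by exact_mod_cast hn)
  set s := ⌈r⌉₊ with hsdef
  have hs1 : 1 ≤ s := Nat.one_le_ceil_iff.2 hr0
  have hrs : r ≤ (s : ℝ) := Nat.le_ceil r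
  have hsr : (s : ℝ) ≤ r + 1 := le_of_lt (Nat.ceil_lt_add_one hr0.le)
  set C : Finset ℕ := (Finset.range (n / s + 1)).image (· * s) ∪ {n} with hC
  have hnC : n ∈ C := Finset.mem_union_right _ (Finset.mem_singleton_self n)
  have hsub : C ⊆ Finset.range (n + 1) := by
    intro x hx
    rw [hC, Finset.mem_union, Finset.mem_image] at hx
    rcases hx with ⟨k, hk, rfl⟩ | hx
    · rw [Finset.mem_range, Nat.lt_add_one_iff] at hk ⊢
      calc k * s ≤ n / s * s := Nat.mul_le_mul_right s hk
        _ ≤ n := Nat.div_mul_le_self n s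
    · rw [Finset.mem_singleton] at hx
      rw [hx]; exact Finset.self_mem_range_succ n
  -- the gap between consecutive checkpoints is at most s
  have hgap : ∀ h i, ConsecPair C h i → i ≤ h + s := by
    rintro h i ⟨hh, hi, hlt, hcon⟩
    have hin : i ≤ n := Nat.lt_add_one_iff.1 (Finset.mem_range.1 (hsub hi))
    have hhn : h < n := lt_of_lt_of_le hlt hin
    rw [hC, Finset.mem_union, Finset.mem_image] at hh
    rcases hh with ⟨k, hk, rfl⟩ | hh
    · rw [Finset.mem_range, Nat.lt_add_one_iff] at hk
      rcases lt_or_eq_of_le hk with hk' | rfl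
      · -- next multiple (k+1)*s is a checkpoint
        have hc : (k + 1) * s ∈ C := by
          rw [hC, Finset.mem_union, Finset.mem_image]
          exact Or.inl ⟨k + 1, Finset.mem_range.2 (Nat.add_lt_add_right hk' 1), rfl⟩
        rcases hcon _ hc with h1 | h2
        · exfalso
          have : k * s < (k + 1) * s := by
            have : 0 < s := hs1
            nlinarith
          omega
        · calc i ≤ (k + 1) * s := h2
            _ = k * s + s := by ring
      · -- last multiple; n is the next checkpoint
        rcases hcon _ hnC with h1 | h2
        · omega
        · have h1 : n / s * s + n % s = n := Nat.div_add_mod' n s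
          have h2 : n % s < s := Nat.mod_lt n hs1
          omega
    · rw [Finset.mem_singleton] at hh; omega
  have hseg : maxSegSum (fun _ => (1 : ℝ)) C ≤ r := by
    apply Real.sSup_le
    · rintro x ⟨h, i, hpair, rfl⟩
      have hgap' := hgap h i hpair
      have hlt := hpair.2.2.1
      simp only [Finset.sum_const, nsmul_eq_mul, mul_one, Nat.card_Ioo]
      have h1 : i - h - 1 ≤ s - 1 := by omega
      calc ((i - h - 1 : ℕ) : ℝ) ≤ ((s - 1 : ℕ) : ℝ) := by exact_mod_cast h1
        _ = (s : ℝ) - 1 := by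
            have : (1:ℕ) ≤ s := hs1
            push_cast [this]; ring
        _ ≤ r := by linarith
    · linarith
  have hcard : (C.card : ℝ) ≤ (↑(n / s) : ℝ) + 2 := by
    have h1 : C.card ≤ n / s + 2 := by
      calc C.card ≤ ((Finset.range (n / s + 1)).image (· * s)).card + 1 := by
            rw [hC]
            exact le_trans (Finset.card_union_le _ _) (by simp)
        _ ≤ (n / s + 1) + 1 := by
            have := Finset.card_image_le (s := Finset.range (n / s + 1)) (f := (· * s))
            simp only [Finset.card_range] at this
            omega
        _ = n / s + 2 := by ring
    exact_mod_cast h1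
  have hdivr : (↑(n / s) : ℝ) ≤ r := by
    calc (↑(n / s) : ℝ) ≤ (n : ℝ) / (s : ℝ) := Nat.cast_div_le
      _ ≤ (n : ℝ) / r := by
          apply div_le_div_of_nonneg_left (by positivity) hr0 hrs
      _ = r := Real.div_sqrt
  refine ⟨C, hsub, ?_, hnC, ?_⟩
  · rw [hC, Finset.mem_union, Finset.mem_image]
    exact Or.inl ⟨0, Finset.mem_range.2 (Nat.succ_pos _), by simp⟩
  · have hsum : (∑ i ∈ C, (1 : ℝ)) = C.card := by simp
    rw [hsum]
    linarith
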